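/- Let f(z) := −log(1−z)/z² − 1/z − 1/2, where log(1−z) is the principal logarithm (so log(1−z) = −∑_{k=1}^∞ z^k/k for |z| ≤ 1, z ≠ 1). Then for all real r with 0 < r < 1 and all real φ with 0 < φ < π, we have −Re f(r·e^{iφ}) < −Re f(−r). -/

import Mathlib

open Real Complex

noncomputable def f12 (z : ℂ) : ℂ := -Complex.log (1 - z) / z ^ 2 - 1 / z - 1 / 2

noncomputable def F12 (φ x : ℝ) : ℝ :=
  Real.log (1 + x) - Real.cos (2*φ)/2 * Real.log (1 - 2*x*Real.cos φ + x^2)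
    + Real.sin (2*φ) * Real.arctan (x * Real.sin φ / (1 - x*Real.cos φ))
    - (1 + Real.cos φ) * x

set_option maxHeartbeats 1000000 in
lemma hasDerivAt_F12 (φ : ℝ) {x : ℝ} (hx0 : 0 ≤ x) (hx1 : x < 1) :
    HasDerivAt (F12 φ)
      (x^2 * (1 + Real.cos φ) * (1 - x) / ((1 + x) * (1 - 2*x*Real.cos φ + x^2))) x := by
  have hcs : Real.sin φ ^ 2 = 1 - Real.cos φ ^ 2 := by
    nlinarith [Real.sin_sq_add_cos_sq φ]
  have hc1 : Real.cos φ ≤ 1 := Real.cos_le_one φ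
  have hcm : -1 ≤ Real.cos φ := Real.neg_one_le_cos φ
  have hD : 0 < 1 - 2*x*Real.cos φ + x^2 := by nlinarith
  have hden : 0 < 1 - x * Real.cos φ := by nlinarith
  have h1x : 0 < 1 + x := by linarith
  have H1 : HasDerivAt (fun y : ℝ => Real.log (1 + y)) ((0+1)/(1+x)) x :=
    HasDerivAt.log ((hasDerivAt_const x (1:ℝ)).add (hasDerivAt_id x)) (ne_of_gt h1x)
  have H2 : HasDerivAt (fun y : ℝ => 1 - 2*y*Real.cos φ + y^2)
      (0 - 2*1*Real.cos φ + ↑2*x^1) x :=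
    ((hasDerivAt_const x (1:ℝ)).sub (((hasDerivAt_id x).const_mul 2).mul_const (Real.cos φ))).add
      (hasDerivAt_pow 2 x)
  have H2' := (H2.log hD.ne').const_mul (Real.cos (2*φ)/2)
  have Hn : HasDerivAt (fun y : ℝ => y * Real.sin φ) (1 * Real.sin φ) x :=
    (hasDerivAt_id x).mul_const _
  have Hd : HasDerivAt (fun y : ℝ => 1 - y * Real.cos φ) (0 - 1 * Real.cos φ) x :=
    (hasDerivAt_const x (1:ℝ)).sub ((hasDerivAt_id x).mul_const _)
  have Hu := Hn.div Hd hden.ne'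
  have Ha := (Hu.arctan).const_mul (Real.sin (2*φ))
  have Hlin : HasDerivAt (fun y : ℝ => (1 + Real.cos φ) * y) ((1 + Real.cos φ) * 1) x :=
    (hasDerivAt_id x).const_mul _
  have Htot := ((H1.sub H2').add Ha).sub Hlin
  refine HasDerivAt.congr_deriv Htot ?_
  simp only [Pi.div_apply]
  set c := Real.cos φ with hcdef
  set s := Real.sin φ with hsdef
  have hcs : s ^ 2 = 1 - c ^ 2 := by
    nlinarith [Real.sin_sq_add_cos_sq φ]
  have h1u : 1 + (x * s / (1 - x * c)) ^ 2 = (1 - 2*x*c + x^2) / (1 - x*c)^2 := by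
    field_simp
    linear_combination x^2 * hcs
  have harc : Real.sin (2*φ) *
      (1 / (1 + (x * s / (1 - x * c)) ^ 2) * ((1 * s * (1 - x * c) - x * s * (0 - 1 * c)) / (1 - x * c) ^ 2))
      = 2 * c * (1 - c^2) / (1 - 2*x*c + x^2) := by
    rw [h1u, Real.sin_two_mul, ← hcdef, ← hsdef]
    field_simp
    have hcx : 1 - c * x ≠ 0 := (by nlinarith : 0 < 1 - c * x).ne'
    rw [hcs]
    field_simp
    ring
  rw [harc, Real.cos_two_mul, ← hcdef]
  have hD' : 1 - x * 2 * c + x ^ 2 ≠ 0 := (by linarith : (0:ℝ) < 1 - x * 2 * c + x ^ 2).ne'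
  field_simp
  ring

set_option maxHeartbeats 1000000 in
lemma F12_pos (φ r : ℝ) (hr0 : 0 < r) (hr1 : r < 1) (hc : -1 < Real.cos φ) :
    0 < F12 φ r := by
  have h0 : F12 φ 0 = 0 := by simp [F12]
  have mono : StrictMonoOn (F12 φ) (Set.Icc 0 r) := by
    apply strictMonoOn_of_deriv_pos (convex_Icc 0 r)
    · intro y hy
      exact ((hasDerivAt_F12 φ hy.1 (lt_of_le_of_lt hy.2 hr1)).differentiableAt).continuousAt.continuousWithinAt
    · intro y hy
      rw [interior_Icc] at hy
      rw [(hasDerivAt_F12 φ hy.1.le ((hy.2).trans hr1)).deriv]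
      have hc1 : Real.cos φ ≤ 1 := Real.cos_le_one φ
      have hy1 : y < 1 := hy.2.trans hr1
      have hy0 : 0 < y := hy.1
      have hD : 0 < 1 - 2*y*Real.cos φ + y^2 := by
        nlinarith [sq_nonneg (1-y), mul_pos hy0 (by linarith : (0:ℝ) < 1 - Real.cos φ + 1)]
      apply div_pos
      · exact mul_pos (mul_pos (by positivity) (by linarith)) (by linarith)
      · exact mul_pos (by linarith) hD
  have := mono (Set.left_mem_Icc.2 hr0.le) (Set.right_mem_Icc.2 hr0.le) hr0
  rwa [h0] at this

set_option maxHeartbeats 1000000 in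
/-- For `0 < r < 1` and `0 < φ < π`, `-Re f(r e^{iφ}) < -Re f(-r)`. -/
theorem stmt_12 (r φ : ℝ) (hr0 : 0 < r) (hr1 : r < 1) (hφ0 : 0 < φ) (hφπ : φ < π) :
    -(f12 ((r : ℂ) * Complex.exp (Complex.I * (φ : ℂ)))).re < -(f12 (-(r : ℂ))).re := by
  have hrne : (r : ℂ) ≠ 0 := Complex.ofReal_ne_zero.2 hr0.ne'
  have hc1 : Real.cos φ < 1 := by
    have := Real.cos_lt_cos_of_nonneg_of_le_pi le_rfl hφπ.le hφ0
    simpa using this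
  have hcm : -1 < Real.cos φ := by
    have := Real.cos_lt_cos_of_nonneg_of_le_pi hφ0.le le_rfl hφπ
    simpa using this
  have hs : 0 < Real.sin φ := Real.sin_pos_of_pos_of_lt_pi hφ0 hφπ
  set c := Real.cos φ with hcdef
  set s := Real.sin φ with hsdef
  have hcs : s^2 = 1 - c^2 := by nlinarith [Real.sin_sq_add_cos_sq φ]
  have hD : 0 < 1 - 2*r*c + r^2 := by nlinarith
  have hden : 0 < 1 - r*c := by nlinarith
  set z : ℂ := (r : ℂ) * Complex.exp (Complex.I * (φ : ℂ)) with hzdef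
  have hz : z = Complex.ofReal (r*c) + Complex.ofReal (r*s) * Complex.I := by
    rw [hzdef, mul_comm Complex.I, Complex.exp_mul_I]
    simp only [hcdef, hsdef, Complex.ofReal_mul, Complex.ofReal_cos, Complex.ofReal_sin]
    ring
  have hzre : z.re = r * c := by rw [hz]; simp
  have hzim : z.im = r * s := by rw [hz]; simp
  have hwre : (1 - z).re = 1 - r*c := by simp [Complex.sub_re, hzre]
  have hwim : (1 - z).im = -(r*s) := by simp [Complex.sub_im, hzim]
  -- abs of 1 - z
  have hnsq : Complex.normSq (1 - z) = 1 - 2*r*c + r^2 := by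
    rw [Complex.normSq_apply, hwre, hwim]
    nlinarith [hcs]
  have habs : ‖1 - z‖ = Real.sqrt (1 - 2*r*c + r^2) := by
    rw [Complex.norm_def, hnsq]
  have hL : Real.log ‖1 - z‖ = Real.log (1 - 2*r*c + r^2) / 2 := by
    rw [habs, Real.log_sqrt hD.le]
  -- arg of 1 - z
  have hargbd1 : -(π/2) < Complex.arg (1 - z) :=
    Complex.neg_pi_div_two_lt_arg_iff.2 (Or.inl (by rw [hwre]; linarith))
  have hargbd2 : Complex.arg (1 - z) < π/2 :=
    Complex.arg_lt_pi_div_two_iff.2 (Or.inl (by rw [hwre]; linarith))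
  have hA : Complex.arg (1 - z) = -Real.arctan (r*s/(1-r*c)) := by
    rw [← Real.arctan_tan hargbd1 hargbd2, Complex.tan_arg, hwre, hwim, ← Real.arctan_neg]
    ring_nf
  -- real parts
  have hnz : z ≠ 0 := by
    rw [hzdef]; exact mul_ne_zero hrne (Complex.exp_ne_zero _)
  have hnsqz : Complex.normSq z = r^2 := by
    rw [Complex.normSq_apply, hzre, hzim]; nlinarith [hcs]
  have hz2re : (z^2).re = r^2 * (c^2 - s^2) := by
    rw [sq, Complex.mul_re, hzre, hzim]; ring
  have hz2im : (z^2).im = r^2 * (2*s*c) := by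
    rw [sq, Complex.mul_im, hzre, hzim]; ring
  have hnsqz2 : Complex.normSq (z^2) = r^4 := by
    rw [map_pow Complex.normSq z 2, hnsqz]; ring
  have hre1 : (f12 z).re =
      -((Real.log (1 - 2*r*c + r^2)/2) * (c^2 - s^2) + (-Real.arctan (r*s/(1-r*c))) * (2*s*c)) / r^2
        - c / r - 1/2 := by
    rw [f12]
    rw [Complex.sub_re, Complex.sub_re]
    rw [div_eq_mul_inv, Complex.mul_re, Complex.inv_re, Complex.inv_im,
        Complex.neg_re, Complex.neg_im, Complex.log_re, Complex.log_im,
        hL, hA, hz2re, hz2im, hnsqz2]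
    rw [one_div, Complex.inv_re, hzre, hnsqz]
    norm_num
    field_simp
    ring
  have hre2 : (f12 (-(r:ℂ))).re = -Real.log (1+r) / r^2 + 1/r - 1/2 := by
    have : f12 (-(r:ℂ)) = Complex.ofReal (-Real.log (1+r) / r^2 + 1/r - 1/2) := by
      rw [f12]
      rw [show (1:ℂ) - -(r:ℂ) = ((1+r : ℝ) : ℂ) by push_cast; ring,
          ← Complex.ofReal_log (by positivity)]
      push_cast
      field_simp
      ring_nf
    rw [this, Complex.ofReal_re]
  -- combine
  have hdiff : (f12 z).re - (f12 (-(r:ℂ))).re = F12 φ r / r^2 := by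
    rw [hre1, hre2]
    simp only [F12]
    rw [Real.cos_two_mul, Real.sin_two_mul, ← hcdef, ← hsdef]
    rw [show c^2 - s^2 = 2*c^2 - 1 by rw [hcs]; ring]
    field_simp
    ring
  have hF := F12_pos φ r hr0 hr1 hcm
  have : 0 < F12 φ r / r^2 := by positivity
  linarith [hdiff, this]
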